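/- Let V be a real vector space, g a symmetric bilinear form on V, ξ ∈ V with g(ξ,ξ) = -1, and η(X) = g(X,ξ). Let λ, κ, σ be real constants, set c = (1/3)(λ + κσ), and define R(X,Y)Z = c·(g(Y,Z)•X − g(X,Z)•Y). Suppose α is a symmetric bilinear form on V satisfying α(R(X,Y)Z, W) + α(Z, R(X,Y)W) = 0 for all X, Y, Z, W ∈ V. Then either λ = −κσ, or α(Y, ξ) = −η(Y)·α(ξ,ξ) for all Y ∈ V. -/
import Mathlib


/-- If a symmetric bilinear form `α` satisfies the Ricci commutation identity
`α(R(X,Y)Z, W) + α(Z, R(X,Y)W) = 0` for the constant curvature tensor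
`R(X,Y)Z = c (g(Y,Z)X − g(X,Z)Y)` with `c = (1/3)(λ + κσ)`, where `g(ξ,ξ) = -1`
and `η(X) = g(X,ξ)`, then either `λ = −κσ` or `α(Y,ξ) = −η(Y) α(ξ,ξ)` for all `Y`. -/
theorem stmt_10 (V : Type*) [AddCommGroup V] [Module ℝ V]
    (g : LinearMap.BilinForm ℝ V) (hgsymm : ∀ X Y : V, g X Y = g Y X)
    (ξ : V) (hξ : g ξ ξ = -1)
    (η : V → ℝ) (hη : ∀ X : V, η X = g X ξ)
    (lam κ σ c : ℝ) (hc : c = (1 / 3) * (lam + κ * σ))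
    (R : V → V → V → V)
    (hR : ∀ X Y Z : V, R X Y Z = c • (g Y Z • X - g X Z • Y))
    (α : LinearMap.BilinForm ℝ V) (hαsymm : ∀ X Y : V, α X Y = α Y X)
    (hcomm : ∀ X Y Z W : V, α (R X Y Z) W + α Z (R X Y W) = 0) :
    lam = -(κ * σ) ∨ ∀ Y : V, α Y ξ = -(η Y * α ξ ξ) := by
  by_cases h0 : c = 0
  · left
    have : lam + κ * σ = 0 := by
      have := hc; rw [h0] at this; linarith
    linarith
  · right
    intro Y
    have key := hcomm Y ξ ξ ξ
    rw [hR] at key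
    rw [hξ, hη Y, hgsymm Y ξ] at *
    simp only [map_smul, map_sub, map_neg, LinearMap.smul_apply, LinearMap.sub_apply,
      LinearMap.neg_apply, neg_smul, one_smul, smul_eq_mul] at key
    have hsym := hαsymm ξ Y
    rw [hsym] at key
    have h2 : c * ((α Y) ξ + (g ξ) Y * (α ξ) ξ) = 0 := by linear_combination -key/2
    rcases mul_eq_zero.mp h2 with h | h
    · exact absurd h h0
    · linarith
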